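/- Let ω : {(s,t) : 0 ≤ s ≤ t ≤ T} → [0,∞) be a control (continuous, superadditive, vanishing on the diagonal). Fix a partition 0 = σ₀ < σ₁ < ... < σ_N < σ_{N+1} = T. Then for every partition D = {0 = t₀ < t₁ < ... < t_n = T} with ω(t_i, t_{i+1}) ≤ 1 for all i, one has Σ_{i=0}^{n-1} ω(t_i, t_{i+1}) ≤ N + Σ_{k=0}^{N} ω(σ_k, σ_{k+1}). -/

import Mathlib

/-- Let `ω` be a control on `[0,T]` (continuous on the simplex, superadditive, vanishing
on the diagonal, nonnegative) and `0 = σ₀ < σ₁ < ... < σ_N < σ_{N+1} = T` a fixed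
partition.  Then any partition `0 = t₀ < ... < t_n = T` with `ω(t_i,t_{i+1}) ≤ 1`
satisfies `Σ ω(t_i,t_{i+1}) ≤ N + Σ_{k=0}^{N} ω(σ_k, σ_{k+1})`. -/
theorem stmt_9 (T : ℝ) (hT : 0 < T) (w : ℝ → ℝ → ℝ)
    (hcont : ContinuousOn (fun p : ℝ × ℝ => w p.1 p.2)
      {p : ℝ × ℝ | 0 ≤ p.1 ∧ p.1 ≤ p.2 ∧ p.2 ≤ T})
    (hnonneg : ∀ s t, 0 ≤ s → s ≤ t → t ≤ T → 0 ≤ w s t)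
    (hdiag : ∀ s, 0 ≤ s → s ≤ T → w s s = 0)
    (hsuper : ∀ s u t, 0 ≤ s → s ≤ u → u ≤ t → t ≤ T → w s u + w u t ≤ w s t)
    (N : ℕ) (σ : ℕ → ℝ) (hσ0 : σ 0 = 0) (hσT : σ (N + 1) = T)
    (hσmono : ∀ i ≤ N, σ i < σ (i + 1))
    (n : ℕ) (t : ℕ → ℝ) (ht0 : t 0 = 0) (htn : t n = T)
    (htmono : ∀ i < n, t i < t (i + 1))
    (hconstr : ∀ i < n, w (t i) (t (i + 1)) ≤ 1) :
    ∑ i ∈ Finset.range n, w (t i) (t (i + 1)) ≤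
      (N : ℝ) + ∑ k ∈ Finset.range (N + 1), w (σ k) (σ (k + 1)) := by
  classical
  -- monotonicity of t
  have tmono : ∀ i j, i ≤ j → j ≤ n → t i ≤ t j := by
    intro i j hij hjn
    induction j with
    | zero => simp [Nat.le_zero.mp hij]
    | succ m ih =>
      rcases Nat.eq_or_lt_of_le hij with h | h
      · rw [h]
      · exact le_trans (ih (Nat.lt_succ_iff.mp h) (le_trans (Nat.le_succ m) hjn))
          (le_of_lt (htmono m (Nat.lt_of_succ_le hjn)))
  have smono : ∀ i j, i ≤ j → j ≤ N + 1 → σ i ≤ σ j := by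
    intro i j hij hjn
    induction j with
    | zero => simp [Nat.le_zero.mp hij]
    | succ m ih =>
      rcases Nat.eq_or_lt_of_le hij with h | h
      · rw [h]
      · exact le_trans (ih (Nat.lt_succ_iff.mp h) (le_trans (Nat.le_succ m) hjn))
          (le_of_lt (hσmono m (Nat.lt_succ_iff.mp hjn)))
  have t0le : ∀ i ≤ n, 0 ≤ t i := fun i hi => ht0 ▸ tmono 0 i (Nat.zero_le i) hi
  have tleT : ∀ i ≤ n, t i ≤ T := fun i hi => htn ▸ tmono i n hi le_rfl
  have s0le : ∀ k ≤ N + 1, 0 ≤ σ k := fun k hk => hσ0 ▸ smono 0 k (Nat.zero_le k) hk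
  have sleT : ∀ k ≤ N + 1, σ k ≤ T := fun k hk => hσT ▸ smono k (N + 1) hk le_rfl
  -- chain superadditivity lemma
  have chain : ∀ S : Finset ℕ, ∀ s u : ℝ, 0 ≤ s → s ≤ u → u ≤ T →
      (∀ i ∈ S, i < n ∧ s ≤ t i ∧ t (i + 1) ≤ u) →
      ∑ i ∈ S, w (t i) (t (i + 1)) ≤ w s u := by
    intro S
    induction S using Finset.induction_on_max with
    | empty =>
      intro s u hs hsu huT _
      simpa using hnonneg s u hs hsu huT
    | insert a S hmax ih =>
      intro s u hs hsu huT hmem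
      obtain ⟨han, hsa, hau⟩ := hmem a (Finset.mem_insert_self a S)
      have haan : t a < t (a + 1) := htmono a han
      have htaT : t (a + 1) ≤ T := le_trans hau huT
      have h1 : ∑ i ∈ S, w (t i) (t (i + 1)) ≤ w s (t a) := by
        apply ih s (t a) hs hsa (le_trans haan.le htaT)
        intro i hi
        obtain ⟨hin, hsi, hiu⟩ := hmem i (Finset.mem_insert_of_mem hi)
        refine ⟨hin, hsi, tmono (i + 1) a (hmax i hi) (le_of_lt han)⟩
      have hna : a ∉ S := fun h => lt_irrefl a (hmax a h)
      rw [Finset.sum_insert hna]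
      have h2 : w s (t a) + w (t a) (t (a + 1)) ≤ w s (t (a + 1)) :=
        hsuper s (t a) (t (a + 1)) hs hsa haan.le htaT
      have h3 : w s (t (a + 1)) + w (t (a + 1)) u ≤ w s u :=
        hsuper s (t (a + 1)) u hs (le_trans hsa haan.le) hau huT
      have h4 : 0 ≤ w (t (a + 1)) u :=
        hnonneg _ _ (le_trans hs (le_trans hsa haan.le)) hau huT
      linarith
  -- crossing intervals
  set Cross : ℕ → Prop := fun i => ∃ k, 1 ≤ k ∧ k ≤ N ∧ t i < σ k ∧ σ k < t (i + 1) with hCross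
  set C : Finset ℕ := (Finset.range n).filter Cross with hC
  set NC : Finset ℕ := (Finset.range n).filter (fun i => ¬ Cross i) with hNC
  set g : ℕ → ℕ := fun i => if h : Cross i then h.choose else 0 with hg
  have gspec : ∀ i, Cross i → 1 ≤ g i ∧ g i ≤ N ∧ t i < σ (g i) ∧ σ (g i) < t (i + 1) := by
    intro i hi
    simp only [hg, dif_pos hi]
    exact hi.choose_spec
  have hcardC : C.card ≤ N := by
    have key : ∀ i ∈ C, ∀ j ∈ C, i < j → g i ≠ g j := by
      intro i hi j hj hij hgij
      simp only [hC, Finset.mem_filter, Finset.mem_range] at hi hj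
      obtain ⟨_, _, hi3, hi4⟩ := gspec i hi.2
      obtain ⟨_, _, hj3, hj4⟩ := gspec j hj.2
      have : t (i + 1) ≤ t j := tmono (i + 1) j hij (le_of_lt hj.1)
      rw [hgij] at hi4
      linarith
    have : C.card ≤ (Finset.Icc 1 N).card := by
      apply Finset.card_le_card_of_injOn g
      · intro i hi
        simp only [hC, Finset.mem_coe, Finset.mem_filter] at hi
        obtain ⟨h1, h2, _, _⟩ := gspec i hi.2
        exact Finset.mem_Icc.mpr ⟨h1, h2⟩
      · intro i hi j hj hgij
        by_contra hne
        rcases Nat.lt_or_ge i j with h | h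
        · exact key i hi j hj h hgij
        · exact key j hj i hi (Nat.lt_of_le_of_ne h (Ne.symm hne)) hgij.symm
    simpa using this
  have hCsum : ∑ i ∈ C, w (t i) (t (i + 1)) ≤ (N : ℝ) := by
    calc ∑ i ∈ C, w (t i) (t (i + 1)) ≤ ∑ _i ∈ C, (1 : ℝ) := by
          apply Finset.sum_le_sum
          intro i hi
          simp only [hC, Finset.mem_filter, Finset.mem_range] at hi
          exact hconstr i hi.1
      _ = (C.card : ℝ) := by simp
      _ ≤ (N : ℝ) := by exact_mod_cast hcardC
  -- non-crossing intervals
  set f : ℕ → ℕ := fun i => Nat.findGreatest (fun k => σ k ≤ t i) N with hf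
  have hfle : ∀ i, f i ≤ N := fun i => Nat.findGreatest_le N
  have hfP : ∀ i, i < n → σ (f i) ≤ t i := by
    intro i hi
    exact Nat.findGreatest_spec (P := fun k => σ k ≤ t i) (Nat.zero_le N)
      (show σ 0 ≤ t i by rw [hσ0]; exact t0le i (le_of_lt hi))
  have hfup : ∀ i, i < n → ¬ Cross i → t (i + 1) ≤ σ (f i + 1) := by
    intro i hin hnc
    by_contra hlt
    push_neg at hlt
    rcases Nat.lt_or_ge (f i) N with h | h
    · have hnP : ¬ σ (f i + 1) ≤ t i :=
        Nat.findGreatest_is_greatest (Nat.lt_succ_self _) (Nat.succ_le_of_lt h)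
      push_neg at hnP
      exact hnc ⟨f i + 1, Nat.le_add_left 1 (f i), h, hnP, hlt⟩
    · have hfN : f i = N := le_antisymm (hfle i) h
      rw [hfN, hσT] at hlt
      exact absurd (tleT (i + 1) hin) (not_le.mpr hlt)
  have hNCsum : ∑ i ∈ NC, w (t i) (t (i + 1)) ≤
      ∑ k ∈ Finset.range (N + 1), w (σ k) (σ (k + 1)) := by
    have hmaps : ∀ i ∈ NC, f i ∈ Finset.range (N + 1) := by
      intro i _
      exact Finset.mem_range.mpr (Nat.lt_succ_of_le (hfle i))
    rw [← Finset.sum_fiberwise_of_maps_to hmaps (fun i => w (t i) (t (i + 1)))]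
    apply Finset.sum_le_sum
    intro k hk
    rw [Finset.mem_range] at hk
    apply chain _ (σ k) (σ (k + 1)) (s0le k (le_of_lt hk))
      (smono k (k + 1) (Nat.le_succ k) hk) (sleT (k + 1) hk)
    intro i hi
    simp only [hNC, Finset.mem_filter, Finset.mem_range] at hi
    obtain ⟨⟨hin, hnc⟩, hfik⟩ := hi
    refine ⟨hin, ?_, ?_⟩
    · rw [← hfik]; exact hfP i hin
    · rw [← hfik]; exact hfup i hin hnc
  -- combine
  have hsplit : ∑ i ∈ Finset.range n, w (t i) (t (i + 1)) =
      ∑ i ∈ C, w (t i) (t (i + 1)) + ∑ i ∈ NC, w (t i) (t (i + 1)) :=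
    (Finset.sum_filter_add_sum_filter_not (Finset.range n) Cross _).symm
  rw [hsplit]
  exact add_le_add hCsum hNCsum
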